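/- Let G be a group and x ∈ ℝG, and let X_x ∈ Mat₂(ℝG) be the matrix with zero diagonal, (X_x)₁₂ = x and (X_x)₂₁ = x*. Then X_x + ½‖X_x‖₁ I₂ is a sum of hermitian squares in Mat₂(ℝG), where ‖X_x‖₁ = ‖x‖₁ + ‖x*‖₁ = 2‖x‖₁. -/

import Mathlib

/-- The group-ring involution on `ℝG` determined by `g ↦ g⁻¹`. -/
noncomputable def gstar {G : Type*} [Group G] (x : MonoidAlgebra ℝ G) : MonoidAlgebra ℝ G :=
  MonoidAlgebra.ofCoeff (Finsupp.equivMapDomain (Equiv.inv G) x.coeff)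

section GroupRingStar
variable {G : Type*} [Group G]

lemma gstar_single (g : G) (a : ℝ) :
    gstar (MonoidAlgebra.single g a) = MonoidAlgebra.single g⁻¹ a := by
  simp [gstar, ← MonoidAlgebra.ofCoeff_single, Finsupp.equivMapDomain_single]

lemma gstar_add (x y : MonoidAlgebra ℝ G) : gstar (x + y) = gstar x + gstar y :=
  MonoidAlgebra.coeff_injective (map_add (Finsupp.domCongr (M := ℝ) (Equiv.inv G)) x.coeff y.coeff)

lemma gstar_zero : gstar (0 : MonoidAlgebra ℝ G) = 0 := by ext g; simp [gstar]

lemma gstar_gstar (x : MonoidAlgebra ℝ G) : gstar (gstar x) = x := by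
  ext g; simp [gstar]

lemma gstar_mul (x y : MonoidAlgebra ℝ G) : gstar (x * y) = gstar y * gstar x := by
  induction x using MonoidAlgebra.induction_linear with
  | zero => simp [gstar_zero]
  | add f g hf hg => rw [add_mul, gstar_add, hf, hg, gstar_add, mul_add]
  | single g a =>
    induction y using MonoidAlgebra.induction_linear with
    | zero => simp [gstar_zero]
    | add f g' hf hg => rw [mul_add, gstar_add, hf, hg, gstar_add, add_mul]
    | single h b =>
      rw [MonoidAlgebra.single_mul_single, gstar_single, gstar_single, gstar_single,
        MonoidAlgebra.single_mul_single, mul_inv_rev, mul_comm]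

/-- `ℝG` as a `*`-ring, with `star` induced by `g ↦ g⁻¹`. -/
noncomputable instance groupRingStar : StarRing (MonoidAlgebra ℝ G) where
  star := gstar
  star_involutive := gstar_gstar
  star_add := gstar_add
  star_mul := gstar_mul

lemma star_of (g : G) : star (MonoidAlgebra.of ℝ G g) = MonoidAlgebra.of ℝ G g⁻¹ := by
  show gstar _ = _
  simp [MonoidAlgebra.of_apply, gstar_single]

end GroupRingStar

/-- The `ℓ¹`-norm of an element of the group ring `ℝG`. -/
noncomputable def l1Norm {G : Type*} [Group G] (x : MonoidAlgebra ℝ G) : ℝ :=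
  ∑ g ∈ x.coeff.support, |x.coeff g|

/-- The `ℓ¹`-norm of a matrix over the group ring: the sum of the norms of entries. -/
noncomputable def matL1Norm {G : Type*} [Group G] {n : ℕ}
    (M : Matrix (Fin n) (Fin n) (MonoidAlgebra ℝ G)) : ℝ :=
  ∑ i, ∑ j, l1Norm (M i j)

/-- A matrix over `ℝG` is a sum of hermitian squares, i.e. lies in `Σ²Matₙ(ℝG)`. -/
def IsMatSOS {G : Type*} [Group G] {n : ℕ}
    (M : Matrix (Fin n) (Fin n) (MonoidAlgebra ℝ G)) : Prop :=
  ∃ (k : ℕ) (A : Fin k → Matrix (Fin n) (Fin n) (MonoidAlgebra ℝ G)),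
    M = ∑ i, star (A i) * A i



-- auxiliary lemmas
lemma star_apply' {G : Type*} [Group G] (x : MonoidAlgebra ℝ G) (g : G) :
    (star x).coeff g = x.coeff g⁻¹ := rfl

lemma star_single' {G : Type*} [Group G] (g : G) (a : ℝ) :
    star (MonoidAlgebra.single g a) = MonoidAlgebra.single g⁻¹ a := gstar_single g a

lemma l1Norm_star {G : Type*} [Group G] (x : MonoidAlgebra ℝ G) :
    l1Norm (star x) = l1Norm x := by
  unfold l1Norm
  refine Finset.sum_nbij' (fun g => g⁻¹) (fun g => g⁻¹) ?_ ?_ ?_ ?_ ?_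
  · intro a ha
    simpa [star_apply'] using ha
  · intro a ha
    simp only [Finsupp.mem_support_iff, star_apply', inv_inv]
    simpa using ha
  · intro a _; simp
  · intro a _; simp
  · intro a _; simp [star_apply']

lemma isMatSOS_of_finset {G : Type*} [Group G] {n : ℕ} {ι : Type*} (s : Finset ι)
    (B : ι → Matrix (Fin n) (Fin n) (MonoidAlgebra ℝ G)) :
    IsMatSOS (∑ g ∈ s, star (B g) * B g) := by
  refine ⟨s.card, fun i => B (s.equivFin.symm i), ?_⟩
  rw [← Finset.sum_attach s (fun a => star (B a) * B a)]
  exact Fintype.sum_equiv s.equivFin _ _ (by simp)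

/-- for `x ∈ ℝG` and `X_x = [[0, x],[x*, 0]]`, the matrix
`X_x + ½‖X_x‖₁ I₂` is a sum of hermitian squares, where `‖X_x‖₁ = 2‖x‖₁`. -/
theorem statement4 {G : Type*} [Group G] (x : MonoidAlgebra ℝ G) :
    matL1Norm !![0, x; star x, 0] = 2 * l1Norm x ∧
    IsMatSOS (!![0, x; star x, 0] +
      ((1 / 2 : ℝ) * matL1Norm !![0, x; star x, 0]) •
        (1 : Matrix (Fin 2) (Fin 2) (MonoidAlgebra ℝ G))) := by
  have hstar : l1Norm (star x) = l1Norm x := l1Norm_star x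
  have h0 : l1Norm (0 : MonoidAlgebra ℝ G) = 0 := by simp [l1Norm]
  have h1 : matL1Norm !![0, x; star x, 0] = 2 * l1Norm x := by
    simp [matL1Norm, Fin.sum_univ_two, h0, hstar]
    ring
  refine ⟨h1, ?_⟩
  rw [h1]
  have hsc : (1 / 2 : ℝ) * (2 * l1Norm x) = l1Norm x := by ring
  rw [hsc]
  set A : G → Matrix (Fin 2) (Fin 2) (MonoidAlgebra ℝ G) := fun g =>
    !![MonoidAlgebra.single 1 (Real.sqrt |x.coeff g|),
       MonoidAlgebra.single g (if 0 < x.coeff g then Real.sqrt |x.coeff g| else -Real.sqrt |x.coeff g|);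
       0, 0] with hA
  have key : !![0, x; star x, 0] +
      (l1Norm x) • (1 : Matrix (Fin 2) (Fin 2) (MonoidAlgebra ℝ G))
      = ∑ g ∈ x.coeff.support, star (A g) * A g := by
    have hsq : ∀ g ∈ x.coeff.support, star (A g) * A g =
        !![MonoidAlgebra.single (1 : G) |x.coeff g|, MonoidAlgebra.single g (x.coeff g);
           MonoidAlgebra.single g⁻¹ (x.coeff g), MonoidAlgebra.single (1 : G) |x.coeff g|] := by
      intro g hg
      have hne : x.coeff g ≠ 0 := Finsupp.mem_support_iff.mp hg
      have hc1 : Real.sqrt |x.coeff g| * Real.sqrt |x.coeff g| = |x.coeff g| :=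
        Real.mul_self_sqrt (abs_nonneg _)
      have hc2 : Real.sqrt |x.coeff g| *
          (if 0 < x.coeff g then Real.sqrt |x.coeff g| else -Real.sqrt |x.coeff g|) = x.coeff g := by
        rcases hne.lt_or_gt with h' | h'
        · rw [if_neg (not_lt.mpr h'.le), mul_neg, hc1, abs_of_neg h', neg_neg]
        · rw [if_pos h', hc1, abs_of_pos h']
      have hc3 : (if 0 < x.coeff g then Real.sqrt |x.coeff g| else -Real.sqrt |x.coeff g|) *
          Real.sqrt |x.coeff g| = x.coeff g := by rw [mul_comm]; exact hc2
      have hc4 : (if 0 < x.coeff g then Real.sqrt |x.coeff g| else -Real.sqrt |x.coeff g|) *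
          (if 0 < x.coeff g then Real.sqrt |x.coeff g| else -Real.sqrt |x.coeff g|) = |x.coeff g| := by
        split <;> [exact hc1; rw [neg_mul_neg, hc1]]
      refine Matrix.ext fun i j => ?_
      fin_cases i <;> fin_cases j <;>
        simp [hA, Matrix.mul_apply, Fin.sum_univ_two, Matrix.star_apply,
          star_single', MonoidAlgebra.single_mul_single, hc1, hc2, hc3, hc4]
    rw [Finset.sum_congr rfl hsq]
    have hsx : star x = ∑ g ∈ x.coeff.support, MonoidAlgebra.single g⁻¹ (x.coeff g) := by
      conv_lhs => rw [← MonoidAlgebra.sum_coeff_single x]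
      rw [Finsupp.sum, star_sum]
      exact Finset.sum_congr rfl fun g _ => star_single' g (x.coeff g)
    have hx : x = ∑ g ∈ x.coeff.support, MonoidAlgebra.single g (x.coeff g) := (MonoidAlgebra.sum_coeff_single x).symm
    have hl : MonoidAlgebra.single (1 : G) (l1Norm x) =
        ∑ g ∈ x.coeff.support, MonoidAlgebra.single (1 : G) |x.coeff g| :=
      map_sum (MonoidAlgebra.singleAddHom (R := ℝ) (1 : G)) _ _
    ext i j
    fin_cases i <;> fin_cases j <;>
      simp [Matrix.sum_apply, Matrix.one_apply, MonoidAlgebra.one_def, MonoidAlgebra.smul_single,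
        ← hsx, ← hx, ← hl]
  rw [key]
  exact isMatSOS_of_finset _ A
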